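/- Limiting value at α = -∞: as α → -∞, I_α(X,Y) = (α/(1-α)) · log Σ_y (Σ_x p_{Y|X=x}(y)^α p_X(x))^{1/α} converges to -log Σ_y min_{x : p_X(x)>0} p_{Y|X=x}(y). -/

import Mathlib

open Real Finset Filter

theorem tendsto_inv_atBot_zero' : Tendsto (fun α : ℝ => 1 / α) atBot (nhds 0) := by
  have h1 : Tendsto (fun α : ℝ => -α) atBot atTop := tendsto_neg_atBot_atTop
  have h2 : Tendsto (fun r : ℝ => r⁻¹) atTop (nhds 0) := tendsto_inv_atTop_zero
  have h : Tendsto (fun α : ℝ => (-α)⁻¹) atBot (nhds 0) := h2.comp h1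
  have h' := h.neg
  rw [neg_zero] at h'
  refine h'.congr fun α => ?_
  rw [one_div, inv_neg, neg_neg]

theorem tendsto_const_rpow_one_div (c : ℝ) (hc : 0 < c) :
    Tendsto (fun α : ℝ => c ^ (1 / α)) atBot (nhds 1) := by
  have h := (Real.continuousAt_const_rpow (a := c) (b := 0) hc.ne').tendsto.comp
    tendsto_inv_atBot_zero'
  simpa [Function.comp_def] using h

theorem squeeze_rpow (m c : ℝ) (hm : 0 < m) (hc : 0 < c) 
    (S : ℝ → ℝ)
    (hlb : ∀ α : ℝ, α < 0 → m ^ α * c ≤ S α)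
    (hub : ∀ α : ℝ, α < 0 → S α ≤ m ^ α) :
    Tendsto (fun α : ℝ => S α ^ (1 / α)) atBot (nhds m) := by
  have hupper : Tendsto (fun α : ℝ => m * c ^ (1 / α)) atBot (nhds m) := by
    have := tendsto_const_nhds (α := ℝ) (x := m) (f := atBot) |>.mul
      (tendsto_const_rpow_one_div c hc)
    simpa using this
  refine tendsto_of_tendsto_of_tendsto_of_le_of_le' tendsto_const_nhds hupper ?_ ?_
  · filter_upwards [eventually_lt_atBot (0:ℝ)] with α hα
    have hS : 0 < S α := lt_of_lt_of_le (by positivity) (hlb α hα)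
    have h1 : (1:ℝ) / α ≤ 0 := le_of_lt (by simpa using (div_neg_of_pos_of_neg one_pos hα))
    have := Real.rpow_le_rpow_of_nonpos hS (hub α hα) h1
    calc m = (m ^ α) ^ (1/α) := by
            rw [← Real.rpow_mul hm.le, mul_one_div_cancel (ne_of_lt hα), Real.rpow_one]
      _ ≤ S α ^ (1/α) := this
  · filter_upwards [eventually_lt_atBot (0:ℝ)] with α hα
    have hpos : (0:ℝ) < m ^ α * c := by positivity
    have h1 : (1:ℝ) / α ≤ 0 := le_of_lt (by simpa using (div_neg_of_pos_of_neg one_pos hα))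
    have := Real.rpow_le_rpow_of_nonpos hpos (hlb α hα) h1
    calc S α ^ (1/α) ≤ (m ^ α * c) ^ (1/α) := this
      _ = m * c ^ (1/α) := by
          rw [Real.mul_rpow (by positivity) hc.le, ← Real.rpow_mul hm.le,
            mul_one_div_cancel (ne_of_lt hα), Real.rpow_one]

/-- Limiting value at `α = -∞`: as `α → -∞`,
`I_α(X,Y) = (α/(1-α)) · log Σ_y (Σ_x p_{Y|X=x}(y)^α p_X(x))^{1/α}` converges to
`-log Σ_y min_{x} p_{Y|X=x}(y)`. -/
theorem sibson_neg_order_tendsto_atBot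
    {X Y : Type*} [Fintype X] [Nonempty X] [Fintype Y]
    (p : X × Y → ℝ) (hp : ∀ z, 0 < p z) (hp1 : ∑ z, p z = 1)
    (pX : X → ℝ) (hpX : ∀ x, pX x = ∑ y, p (x, y)) :
    Filter.Tendsto
      (fun α : ℝ => (α / (1 - α)) *
        Real.log (∑ y, (∑ x, (p (x, y) / pX x) ^ α * pX x) ^ (1 / α)))
      Filter.atBot
      (nhds (-Real.log (∑ y,
        Finset.univ.inf' Finset.univ_nonempty (fun x => p (x, y) / pX x)))) := by
  have hratio : Tendsto (fun α : ℝ => α / (1 - α)) atBot (nhds (-1)) := by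
    have h1 : Tendsto (fun α : ℝ => 1 / α - 1) atBot (nhds (0 - 1)) :=
      tendsto_inv_atBot_zero'.sub tendsto_const_nhds
    have h2 := h1.inv₀ (by norm_num)
    have h3 : ((0:ℝ) - 1)⁻¹ = -1 := by norm_num
    rw [h3] at h2
    refine h2.congr' ?_
    filter_upwards [eventually_lt_atBot (0:ℝ)] with α hα
    have hα' : α ≠ 0 := ne_of_lt hα
    have : 1 / α - 1 = (1 - α) / α := by field_simp
    rw [this, inv_div]
  -- case on Y empty
  rcases isEmpty_or_nonempty Y with hY | hY
  · simp only [Finset.univ_eq_empty, Finset.sum_empty, Real.log_zero, mul_zero, neg_zero]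
    exact tendsto_const_nhds
  -- positivity facts
  have hpX_pos : ∀ x, 0 < pX x := fun x => by
    rw [hpX x]
    exact Finset.sum_pos (fun y _ => hp (x, y)) Finset.univ_nonempty
  have hq_pos : ∀ x y, 0 < p (x, y) / pX x := fun x y => div_pos (hp _) (hpX_pos x)
  have hpXsum : ∑ x, pX x = 1 := by
    calc ∑ x, pX x = ∑ x, ∑ y, p (x, y) := by simp [hpX]
      _ = ∑ z, p z := by rw [← Fintype.sum_prod_type]
      _ = 1 := hp1
  set m : Y → ℝ := fun y => Finset.univ.inf' Finset.univ_nonempty (fun x => p (x, y) / pX x)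
    with hm_def
  have hm_pos : ∀ y, 0 < m y := by
    intro y
    obtain ⟨x0, -, hx0⟩ := Finset.exists_mem_eq_inf' (Finset.univ_nonempty)
      (fun x => p (x, y) / pX x)
    rw [show m y = p (x0, y) / pX x0 from hx0]
    exact hq_pos x0 y
  -- inner tendsto for each y
  have hinner : ∀ y : Y, Tendsto
      (fun α : ℝ => (∑ x, (p (x, y) / pX x) ^ α * pX x) ^ (1 / α)) atBot (nhds (m y)) := by
    intro y
    obtain ⟨x0, -, hx0⟩ := Finset.exists_mem_eq_inf' (Finset.univ_nonempty)
      (fun x => p (x, y) / pX x)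
    have hc : 0 < pX x0 := hpX_pos x0
    have hc1 : pX x0 ≤ 1 := by
      rw [← hpXsum]
      exact Finset.single_le_sum (fun x _ => (hpX_pos x).le) (Finset.mem_univ x0)
    refine squeeze_rpow (m y) (pX x0) (hm_pos y) hc _ ?_ ?_
    · intro α hα
      rw [show m y = p (x0, y) / pX x0 from hx0]
      exact Finset.single_le_sum
        (fun x _ => mul_nonneg (Real.rpow_nonneg (hq_pos x y).le α) (hpX_pos x).le)
        (Finset.mem_univ x0)
    · intro α hα
      calc ∑ x, (p (x, y) / pX x) ^ α * pX x ≤ ∑ x, m y ^ α * pX x := by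
            refine Finset.sum_le_sum fun x _ => ?_
            refine mul_le_mul_of_nonneg_right ?_ (hpX_pos x).le
            exact Real.rpow_le_rpow_of_nonpos (hm_pos y)
              (Finset.inf'_le _ (Finset.mem_univ x)) hα.le
        _ = m y ^ α := by rw [← Finset.mul_sum, hpXsum, mul_one]
  have hsum : Tendsto (fun α : ℝ => ∑ y, (∑ x, (p (x, y) / pX x) ^ α * pX x) ^ (1 / α))
      atBot (nhds (∑ y, m y)) := tendsto_finset_sum _ fun y _ => hinner y
  have hM : (0:ℝ) < ∑ y, m y := Finset.sum_pos (fun y _ => hm_pos y) Finset.univ_nonempty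
  have hlog : Tendsto (fun α : ℝ =>
      Real.log (∑ y, (∑ x, (p (x, y) / pX x) ^ α * pX x) ^ (1 / α)))
      atBot (nhds (Real.log (∑ y, m y))) :=
    (Real.continuousAt_log hM.ne').tendsto.comp hsum
  have := hratio.mul hlog
  rwa [neg_one_mul] at this
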